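/- Classification of nimreps for group-like (lattice) fusion: every nimrep of the fusion ring Z[L*/L] (in which every basis element is a simple-current) is equivalent to one of the form: boundary states B = L*/E* for some intermediate lattice L ⊆ E ⊆ L*, with module structure [u].[m]_{E*} = [u+m]_{E*}; the exponents are the cosets E/L, each with multiplicity 1. -/

import Mathlib

/-!
STATEMENT 0: Every entry of a modular invariant for the lattice (torus) chiral
data is either 0 or 1.
-/

open scoped BigOperators
open Complex

noncomputable section

/-- The Euclidean dot product on `Fin n → ℝ`. -/
def dotR {n : ℕ} (u v : Fin n → ℝ) : ℝ := ∑ i, u i * v i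

lemma dotR_add_left {n : ℕ} (u v w : Fin n → ℝ) :
    dotR (u + v) w = dotR u w + dotR v w := by
  simp [dotR, add_mul, Finset.sum_add_distrib]

lemma dotR_neg_left {n : ℕ} (u w : Fin n → ℝ) : dotR (-u) w = -dotR u w := by
  simp [dotR]

/-- `L` is an even lattice: `u ⬝ u ∈ 2ℤ` for all `u ∈ L`. -/
def IsEvenLattice {n : ℕ} (L : AddSubgroup (Fin n → ℝ)) : Prop :=
  ∀ u ∈ L, ∃ m : ℤ, dotR u u = 2 * m

/-- The dual lattice `L* = {x : x ⬝ L ⊆ ℤ}`. -/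
def dualLattice {n : ℕ} (L : AddSubgroup (Fin n → ℝ)) : AddSubgroup (Fin n → ℝ) where
  carrier := {x | ∀ l ∈ L, ∃ m : ℤ, dotR x l = m}
  zero_mem' := fun l _ => ⟨0, by simp [dotR]⟩
  add_mem' := by
    intro a b ha hb l hl
    obtain ⟨m, hm⟩ := ha l hl
    obtain ⟨m', hm'⟩ := hb l hl
    exact ⟨m + m', by rw [dotR_add_left, hm, hm']; push_cast; ring⟩
  neg_mem' := by
    intro a ha l hl
    obtain ⟨m, hm⟩ := ha l hl
    exact ⟨-m, by rw [dotR_neg_left, hm]; push_cast; ring⟩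

/-- The group of primaries `L*/L`. -/
abbrev latQuot {n : ℕ} (L : AddSubgroup (Fin n → ℝ)) :=
  dualLattice L ⧸ (L.addSubgroupOf (dualLattice L))

/-- The class of an element of `L*` in `L*/L`. -/
def mkQ {n : ℕ} (L : AddSubgroup (Fin n → ℝ)) (x : dualLattice L) : latQuot L :=
  QuotientAddGroup.mk x

/-- The S-matrix of the lattice chiral data:
`S_{[u],[v]} = |L*/L|^{-1/2} exp(2 π i u⬝v)`. -/
def Smat {n : ℕ} (L : AddSubgroup (Fin n → ℝ)) [Fintype (latQuot L)] :
    Matrix (latQuot L) (latQuot L) ℂ := fun x y =>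
  (((Real.sqrt (Fintype.card (latQuot L)))⁻¹ : ℝ) : ℂ) *
    Complex.exp (2 * Real.pi * Complex.I *
      (dotR ((Quotient.out x : dualLattice L) : Fin n → ℝ)
            ((Quotient.out y : dualLattice L) : Fin n → ℝ)))

/-- The subgroup of `L*` of vectors pairing integrally with `E`. -/
def intAgainst {n : ℕ} (L E : AddSubgroup (Fin n → ℝ)) :
    AddSubgroup (dualLattice L) where
  carrier := {m | ∀ e ∈ E, ∃ z : ℤ, dotR (m : Fin n → ℝ) e = z}
  zero_mem' := fun e _ => ⟨0, by simp [dotR]⟩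
  add_mem' := by
    intro a b ha hb e he
    obtain ⟨z, hz⟩ := ha e he
    obtain ⟨z', hz'⟩ := hb e he
    refine ⟨z + z', ?_⟩
    push_cast
    rw [dotR_add_left, hz, hz']
  neg_mem' := by
    intro a ha e he
    obtain ⟨z, hz⟩ := ha e he
    refine ⟨-z, ?_⟩
    push_cast
    rw [dotR_neg_left, hz]

/-- The subgroup `E*/L` of `L*/L` (the kernel of the translation nimrep with
exponents `E/L`). -/
def Kdual {n : ℕ} (L E : AddSubgroup (Fin n → ℝ)) : AddSubgroup (latQuot L) :=
  AddSubgroup.map (QuotientAddGroup.mk' (L.addSubgroupOf (dualLattice L)))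
    (intAgainst L E)

/-! ### Auxiliary lemmas -/

section Aux

variable {n : ℕ}

lemma dotR_comm (u v : Fin n → ℝ) : dotR u v = dotR v u := by
  simp [dotR, mul_comm]

lemma dotR_smul_left (c : ℝ) (u v : Fin n → ℝ) : dotR (c • u) v = c * dotR u v := by
  simp [dotR, Finset.mul_sum, mul_assoc]

lemma dotR_add_right (u v w : Fin n → ℝ) : dotR u (v + w) = dotR u v + dotR u w := by
  rw [dotR_comm, dotR_add_left, dotR_comm v u, dotR_comm w u]

lemma dotR_neg_right (u v : Fin n → ℝ) : dotR u (-v) = -dotR u v := by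
  rw [dotR_comm, dotR_neg_left, dotR_comm]

lemma dotR_smul_right (c : ℝ) (u v : Fin n → ℝ) : dotR u (c • v) = c * dotR u v := by
  rw [dotR_comm, dotR_smul_left, dotR_comm]

lemma dotR_self_eq_zero {v : Fin n → ℝ} (h : dotR v v = 0) : v = 0 := by
  funext i
  have h1 : ∀ j ∈ Finset.univ, (0:ℝ) ≤ v j * v j := fun j _ => mul_self_nonneg _
  have h2 := (Finset.sum_eq_zero_iff_of_nonneg h1).1 h i (Finset.mem_univ i)
  simpa using mul_self_eq_zero.1 h2

/-- The dot product as a bilinear form. -/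
def bform (n : ℕ) : LinearMap.BilinForm ℝ (Fin n → ℝ) :=
  LinearMap.mk₂ ℝ dotR dotR_add_left dotR_smul_left dotR_add_right dotR_smul_right

@[simp] lemma bform_apply (u v : Fin n → ℝ) : bform n u v = dotR u v := rfl

lemma bform_nondeg : (bform n).Nondegenerate := ⟨fun x h =>
  dotR_self_eq_zero (h x), fun x h => dotR_self_eq_zero (h x)⟩

lemma bform_symm : (bform n).IsSymm := LinearMap.BilinForm.isSymm_def.mpr fun x y => by
  simpa using dotR_comm x y

lemma AddSubgroup.mem_toIntSubmodule {M : Type*} [AddCommGroup M] (S : AddSubgroup M)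
    {x : M} : x ∈ AddSubgroup.toIntSubmodule S ↔ x ∈ S := Iff.rfl

lemma toIntSubmodule_dualLattice (A : AddSubgroup (Fin n → ℝ)) :
    AddSubgroup.toIntSubmodule (dualLattice A)
      = (bform n).dualSubmodule (AddSubgroup.toIntSubmodule A) := by
  ext x
  simp only [AddSubgroup.mem_toIntSubmodule, LinearMap.BilinForm.mem_dualSubmodule]
  constructor
  · intro hx y hy
    obtain ⟨m, hm⟩ := hx y (by simpa using hy)
    refine Submodule.mem_one.mpr ⟨m, ?_⟩
    simpa using hm.symm
  · intro hx l hl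
    obtain ⟨m, hm⟩ := Submodule.mem_one.mp (hx l (by simpa using hl))
    exact ⟨m, by simpa using hm.symm⟩

lemma intSMul_one_inj : Function.Injective fun r : ℤ => r • (1 : ℝ) := by
  intro a b h
  simpa using h

lemma dualLattice_dualLattice (L Λ : AddSubgroup (Fin n → ℝ))
    (hspan : Submodule.span ℝ (L : Set (Fin n → ℝ)) = ⊤)
    (hLΛ : L ≤ Λ) (hΛ : Λ ≤ dualLattice L) :
    dualLattice (dualLattice Λ) = Λ := by
  classical
  obtain ⟨s, hsL, hs_span, hs_li⟩ := exists_linearIndependent ℝ (L : Set (Fin n → ℝ))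
  have hs_fin : s.Finite := hs_li.finite
  haveI := hs_fin.fintype
  have hs_top : Submodule.span ℝ s = ⊤ := by rw [hs_span, hspan]
  let b : Module.Basis s ℝ (Fin n → ℝ) := Module.Basis.mk hs_li (by rw [Subtype.range_coe]; exact hs_top.ge)
  have hb : ∀ i : s, b i = (i : Fin n → ℝ) := fun i => by simp [b]
  set d := (bform n).dualBasis bform_nondeg b with hd
  have hΛle : AddSubgroup.toIntSubmodule Λ ≤ Submodule.span ℤ (Set.range d) := by
    rw [hd, ← LinearMap.BilinForm.dualSubmodule_span_of_basis _ bform_nondeg b]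
    intro x hx y hy
    have hy' : y ∈ AddSubgroup.toIntSubmodule L := by
      have hle : Submodule.span ℤ (Set.range b) ≤ AddSubgroup.toIntSubmodule L := by
        rw [Submodule.span_le]
        rintro _ ⟨i, rfl⟩
        simpa [hb] using hsL i.2
      exact hle hy
    obtain ⟨m, hm⟩ := hΛ (by simpa [AddSubgroup.mem_toIntSubmodule] using hx) y (by simpa [AddSubgroup.mem_toIntSubmodule] using hy')
    refine Submodule.mem_one.mpr ⟨m, ?_⟩
    simpa using hm.symm
  have hd_li : LinearIndependent ℤ d :=
    (((bform n).dualBasis bform_nondeg b).linearIndependent).restrict_scalars intSMul_one_inj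
  obtain ⟨m, c⟩ := Submodule.basisOfPidOfLESpan hd_li hΛle
  have hb_li : LinearIndependent ℤ (fun i : s => (i : Fin n → ℝ)) :=
    hs_li.restrict_scalars intSMul_one_inj
  have h1 : Fintype.card s ≤ m := by
    have hli3 : LinearIndependent ℤ
        (fun i : s => (⟨(i : Fin n → ℝ),
          (AddSubgroup.mem_toIntSubmodule _).mpr (hLΛ (hsL i.2))⟩ :
            AddSubgroup.toIntSubmodule Λ)) := by
      apply LinearIndependent.of_comp (AddSubgroup.toIntSubmodule Λ).subtype
      exact hb_li
    simpa using c.card_le_card_of_linearIndependent hli3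
  have h2 : m ≤ Fintype.card s := by
    let bd : Module.Basis s ℤ (Submodule.span ℤ (Set.range d)) := Module.Basis.span hd_li
    have hli : LinearIndependent ℤ
        (fun j : Fin m => (⟨((c j : AddSubgroup.toIntSubmodule Λ) : Fin n → ℝ),
          hΛle (c j).2⟩ : Submodule.span ℤ (Set.range d))) := by
      apply LinearIndependent.of_comp (Submodule.span ℤ (Set.range d)).subtype
      exact c.linearIndependent.map' (AddSubgroup.toIntSubmodule Λ).subtype
        (Submodule.ker_subtype _)
    simpa using bd.card_le_card_of_linearIndependent hli
  let v : Fin m → (Fin n → ℝ) := fun j => ((c j : AddSubgroup.toIntSubmodule Λ) : Fin n → ℝ)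
  have hv_span : Submodule.span ℤ (Set.range v) = AddSubgroup.toIntSubmodule Λ := by
    have hr : Set.range v = (AddSubgroup.toIntSubmodule Λ).subtype '' Set.range c := by
      rw [← Set.range_comp]; rfl
    rw [hr, ← Submodule.map_span, c.span_eq, Submodule.map_top, Submodule.range_subtype]
  have hm_card : Fintype.card (Fin m) = Module.finrank ℝ (Fin n → ℝ) := by
    have hcs : Fintype.card s = Module.finrank ℝ (Fin n → ℝ) :=
      (Module.finrank_eq_card_basis b).symm
    rw [Fintype.card_fin, le_antisymm h2 h1, hcs]
  have hv_top : ⊤ ≤ Submodule.span ℝ (Set.range v) := by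
    rw [← hspan]
    apply Submodule.span_le.2
    intro x hx
    have hx2 : x ∈ Submodule.span ℤ (Set.range v) :=
      hv_span ▸ ((AddSubgroup.mem_toIntSubmodule _).mpr (hLΛ hx))
    exact Submodule.span_subset_span ℤ ℝ _ hx2
  let vb : Module.Basis (Fin m) ℝ (Fin n → ℝ) := basisOfTopLeSpanOfCardEqFinrank v hv_top hm_card
  have hvb : ⇑vb = v := coe_basisOfTopLeSpanOfCardEqFinrank v hv_top hm_card
  have key : (bform n).dualSubmodule ((bform n).dualSubmodule (AddSubgroup.toIntSubmodule Λ))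
      = AddSubgroup.toIntSubmodule Λ := by
    have hΛv : AddSubgroup.toIntSubmodule Λ = Submodule.span ℤ (Set.range vb) := by
      rw [hvb, hv_span]
    rw [hΛv, LinearMap.BilinForm.dualSubmodule_dualSubmodule_of_basis _ bform_nondeg bform_symm vb]
  apply AddSubgroup.toIntSubmodule.injective
  rw [toIntSubmodule_dualLattice, toIntSubmodule_dualLattice, key]

lemma span_top_of_finite (L : AddSubgroup (Fin n → ℝ)) (hLL : L ≤ dualLattice L)
    [Fintype (latQuot L)] : Submodule.span ℝ (L : Set (Fin n → ℝ)) = ⊤ := by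
  by_contra hne
  obtain ⟨f, hf0, hfmap⟩ := Submodule.exists_dual_map_eq_bot_of_lt_top
    (lt_top_iff_ne_top.mpr hne) inferInstance
  set v : Fin n → ℝ := fun i => f (fun j => if i = j then 1 else 0) with hv
  have hfx : ∀ x, f x = dotR x v := by
    intro x
    rw [LinearMap.pi_apply_eq_sum_univ f x]
    simp [dotR, hv, smul_eq_mul]
  have hvanish : ∀ l ∈ L, f l = 0 := by
    intro l hl
    have hmem : f l ∈ Submodule.map f (Submodule.span ℝ (L : Set (Fin n → ℝ))) :=
      ⟨l, Submodule.subset_span hl, rfl⟩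
    rw [hfmap] at hmem
    simpa using hmem
  have hmemdual : ∀ t : ℝ, t • v ∈ dualLattice L := by
    intro t l hl
    refine ⟨0, ?_⟩
    rw [dotR_smul_left]
    have hvl : dotR v l = 0 := by rw [dotR_comm, ← hfx l, hvanish l hl]
    rw [hvl]; simp
  obtain ⟨t, t', hne', heq⟩ := Finite.exists_ne_map_eq_of_infinite
    (fun t : ℝ => (QuotientAddGroup.mk ⟨t • v, hmemdual t⟩ : latQuot L))
  rw [QuotientAddGroup.eq] at heq
  have hmem : (-(t • v) + t' • v) ∈ L := by
    simpa [AddSubgroup.mem_addSubgroupOf] using heq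
  have hzero : f (-(t • v) + t' • v) = 0 := hvanish _ hmem
  rw [hfx, dotR_add_left, dotR_neg_left, dotR_smul_left, dotR_smul_left] at hzero
  have hvv : dotR v v = 0 := by
    have hne'' : t' - t ≠ 0 := sub_ne_zero.mpr (Ne.symm hne')
    have : (t' - t) * dotR v v = 0 := by linarith
    exact (mul_eq_zero.mp this).resolve_left hne''
  have : v = 0 := dotR_self_eq_zero hvv
  apply hf0
  apply LinearMap.ext
  intro x
  rw [hfx, this]
  simp [dotR]

end Aux

/- STATEMENT 5: classification of nimreps for group-like (lattice) fusion:
every nimrep of the fusion ring Z[L^* / L] is equivalent to the translation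
nimrep on L^* / E^* for some intermediate lattice L <= E <= L^*; its exponents
are the cosets E/L, each with multiplicity 1. -/
theorem stmt_5 {n : ℕ} (L : AddSubgroup (Fin n → ℝ))
    (hEven : IsEvenLattice L) (hLL : L ≤ dualLattice L)
    [Fintype (latQuot L)]
    (B : Type) [Fintype B] [DecidableEq B] [Nonempty B]
    (N : latQuot L → Matrix B B ℕ)
    (hone : N 0 = 1)
    (hmul : ∀ u v, N u * N v = N (u + v))
    (htr : ∀ u, N (-u) = (N u).transpose)
    (hindec : ∀ x y : B, ∃ u, N u x y ≠ 0) :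
    ∃ E : AddSubgroup (Fin n → ℝ), L ≤ E ∧ E ≤ dualLattice L ∧
      ∃ φ : B ≃ (latQuot L ⧸ Kdual L E),
        -- the nimrep is equivalent to translation on `L*/E*`
        (∀ (u : latQuot L) (x y : B),
            N u x y ≠ 0 ↔ QuotientAddGroup.mk' (Kdual L E) u + φ x = φ y) ∧
        -- every coset in `E/L` is an exponent ...
        (∀ e : dualLattice L, (e : Fin n → ℝ) ∈ E →
          ∃ v : B → ℂ, v ≠ 0 ∧ ∀ (u : dualLattice L) (x : B),
            ∑ y, (N (mkQ L u) x y : ℂ) * v y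
              = Complex.exp (2 * Real.pi * Complex.I *
                  dotR (e : Fin n → ℝ) (u : Fin n → ℝ)) * v x) ∧
        -- ... with multiplicity one
        (∀ e : dualLattice L, (e : Fin n → ℝ) ∈ E →
          ∀ v w : B → ℂ,
            (∀ (u : dualLattice L) (x : B),
              ∑ y, (N (mkQ L u) x y : ℂ) * v y
                = Complex.exp (2 * Real.pi * Complex.I *
                    dotR (e : Fin n → ℝ) (u : Fin n → ℝ)) * v x) →
            (∀ (u : dualLattice L) (x : B),
              ∑ y, (N (mkQ L u) x y : ℂ) * w y
                = Complex.exp (2 * Real.pi * Complex.I *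
                    dotR (e : Fin n → ℝ) (u : Fin n → ℝ)) * w x) →
            ∃ c c' : ℂ, (c, c') ≠ (0, 0) ∧ c • v = c' • w) := by
  classical
  -- Each N u is a permutation matrix.
  have key : ∀ (u : latQuot L) (x : B), ∃ y, N u x y = 1 ∧ ∀ z, z ≠ y → N u x z = 0 := by
    intro u x
    have h1 : (N u * N (-u)) x x = 1 := by
      rw [hmul, add_neg_cancel, hone]; simp [Matrix.one_apply]
    rw [htr] at h1
    have hsum : ∑ y, N u x y * N u x y = 1 := by
      simpa [Matrix.mul_apply, Matrix.transpose_apply] using h1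
    obtain ⟨y, -, hy⟩ := Finset.exists_ne_zero_of_sum_ne_zero
      (by rw [hsum]; norm_num : ∑ y, N u x y * N u x y ≠ 0)
    have hyle : N u x y * N u x y ≤ 1 :=
      hsum ▸ Finset.single_le_sum (f := fun w => N u x w * N u x w) (fun z _ => Nat.zero_le _) (Finset.mem_univ y)
    have hy1 : N u x y = 1 := by
      have hpos : 1 ≤ N u x y := Nat.one_le_iff_ne_zero.mpr (fun h => hy (by rw [h]; ring))
      have hle2 : N u x y ≤ N u x y * N u x y := Nat.le_mul_of_pos_left _ (by omega)
      omega
    refine ⟨y, hy1, fun z hz => ?_⟩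
    have hre := Finset.add_sum_erase Finset.univ (fun w => N u x w * N u x w) (Finset.mem_univ y)
    rw [hsum] at hre
    simp only [hy1, mul_one] at hre
    have hrest : ∑ w ∈ Finset.univ.erase y, N u x w * N u x w = 0 := by omega
    have hz0 := (Finset.sum_eq_zero_iff.mp hrest) z (Finset.mem_erase.mpr ⟨hz, Finset.mem_univ z⟩)
    exact (Nat.mul_eq_zero.mp hz0).elim (fun h => h) (fun h => h)
  choose f hf1 hf2 using key
  have hne0 : ∀ u x y, N u x y ≠ 0 ↔ y = f u x := by
    intro u x y
    constructor
    · intro h; by_contra hzz; exact h (hf2 u x y hzz)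
    · rintro rfl; rw [hf1]; exact one_ne_zero
  have hf0 : ∀ x, f 0 x = x := by
    intro x
    have h : N 0 x x ≠ 0 := by rw [hone]; simp [Matrix.one_apply]
    exact ((hne0 0 x x).1 h).symm
  have hadd : ∀ u v x, f (u + v) x = f v (f u x) := by
    intro u v x
    have h : N (u + v) x (f v (f u x)) ≠ 0 := by
      rw [← hmul, Matrix.mul_apply]
      intro hz
      rw [Finset.sum_eq_zero_iff] at hz
      have := hz (f u x) (Finset.mem_univ _)
      rw [hf1, hf1] at this
      omega
    exact ((hne0 _ _ _).1 h).symm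
  have hinv : ∀ u x, f (-u) (f u x) = x := by
    intro u x
    rw [← hadd, add_neg_cancel, hf0]
  have htrans : ∀ x y : B, ∃ u, f u x = y := by
    intro x y; obtain ⟨u, hu⟩ := hindec x y; exact ⟨u, ((hne0 u x y).1 hu).symm⟩
  let x0 : B := Classical.arbitrary B
  let K : AddSubgroup (latQuot L) :=
    { carrier := {u | f u x0 = x0}
      zero_mem' := hf0 x0
      add_mem' := by
        intro a b ha hb
        show f (a + b) x0 = x0
        rw [hadd, ha, hb]
      neg_mem' := by
        intro a ha
        show f (-a) x0 = x0
        have h := hinv a x0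
        rw [show f a x0 = x0 from ha] at h
        exact h }
  have hKmem : ∀ u, u ∈ K ↔ f u x0 = x0 := fun u => Iff.rfl
  let mkh := QuotientAddGroup.mk' (L.addSubgroupOf (dualLattice L))
  have hmkh : ∀ a : dualLattice L, mkh a = QuotientAddGroup.mk a := fun a => rfl
  let Ktil : AddSubgroup (Fin n → ℝ) :=
    AddSubgroup.map (dualLattice L).subtype (AddSubgroup.comap mkh K)
  have hLKtil : L ≤ Ktil := by
    intro l hl
    refine ⟨⟨l, hLL hl⟩, ?_, rfl⟩
    show mkh ⟨l, hLL hl⟩ ∈ K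
    have h0 : mkh ⟨l, hLL hl⟩ = 0 := by
      rw [hmkh]
      exact (QuotientAddGroup.eq_zero_iff _).mpr
        ((AddSubgroup.mem_addSubgroupOf).mpr hl)
    rw [h0]; exact K.zero_mem
  have hKtilL : Ktil ≤ dualLattice L := by
    rintro x ⟨⟨m, hm⟩, -, rfl⟩; exact hm
  have hspan := span_top_of_finite L hLL
  have hdd : dualLattice (dualLattice Ktil) = Ktil :=
    dualLattice_dualLattice L Ktil hspan hLKtil hKtilL
  have hLE : L ≤ dualLattice Ktil := by
    intro l hl k hk
    obtain ⟨z, hz⟩ := hKtilL hk l hl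
    exact ⟨z, by rw [dotR_comm]; exact hz⟩
  have hEL : dualLattice Ktil ≤ dualLattice L := by
    intro x hx l hl
    exact hx l (hLKtil hl)
  refine ⟨dualLattice Ktil, hLE, hEL, ?_⟩
  have hKdual : Kdual L (dualLattice Ktil) = K := by
    ext u
    simp only [Kdual, AddSubgroup.mem_map]
    constructor
    · rintro ⟨m, hmInt, rfl⟩
      have hmem : (m : Fin n → ℝ) ∈ dualLattice (dualLattice Ktil) := by
        intro e he
        exact hmInt e he
      rw [hdd] at hmem
      obtain ⟨m', hm', hmm⟩ := hmem
      have hm'm : m' = m := Subtype.ext hmm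
      rw [hm'm] at hm'
      exact hm'
    · intro hu
      refine ⟨Quotient.out u, ?_, ?_⟩
      · intro e he
        have hmem : ((Quotient.out u : dualLattice L) : Fin n → ℝ) ∈ Ktil := by
          refine ⟨Quotient.out u, ?_, rfl⟩
          show mkh (Quotient.out u) ∈ K
          have hout : mkh (Quotient.out u) = u := by
            rw [hmkh]; exact Quotient.out_eq u
          rw [hout]; exact hu
        obtain ⟨z, hz⟩ := he _ hmem
        exact ⟨z, by rw [dotR_comm]; exact hz⟩
      · show mkh (Quotient.out u) = u
        rw [hmkh]; exact Quotient.out_eq u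
  rw [hKdual]
  -- the equivalence B ≃ (latQuot L) ⧸ K
  let ψ : latQuot L ⧸ K → B := fun q => Quotient.liftOn' q (fun u => f u x0) (by
    intro a b hab
    rw [QuotientAddGroup.leftRel_apply] at hab
    show f a x0 = f b x0
    have hb : f b x0 = f (a + (-a + b)) x0 := by rw [add_neg_cancel_left]
    rw [hb, add_comm, hadd, show f (-a + b) x0 = x0 from hab])
  have hψmk : ∀ u : latQuot L, ψ (QuotientAddGroup.mk u) = f u x0 := fun u => rfl
  have hψbij : Function.Bijective ψ := by
    constructor
    · intro q q'
      refine Quotient.inductionOn₂' q q' ?_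
      intro a b hab
      have hab' : f a x0 = f b x0 := hab
      apply Quotient.sound'
      rw [QuotientAddGroup.leftRel_apply]
      show f (-a + b) x0 = x0
      rw [add_comm, hadd, ← hab', hinv]
    · intro y
      obtain ⟨u, hu⟩ := htrans x0 y
      exact ⟨QuotientAddGroup.mk u, hu⟩
  let eB := Equiv.ofBijective ψ hψbij
  have heB : ∀ q, eB q = ψ q := fun q => rfl
  have hact : ∀ (u : latQuot L) (q : latQuot L ⧸ K),
      ψ (QuotientAddGroup.mk' K u + q) = f u (ψ q) := by
    intro u q
    refine Quotient.inductionOn' q ?_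
    intro a
    have h1 : QuotientAddGroup.mk' K u + (Quotient.mk'' a : latQuot L ⧸ K)
        = QuotientAddGroup.mk (u + a) := rfl
    rw [h1, hψmk, add_comm, hadd]
    rfl
  -- surjectivity of mkQ with chosen representatives
  have hsurj0 : ∀ y : B, ∃ a : dualLattice L, f (mkQ L a) x0 = y := by
    intro y
    obtain ⟨u, hu⟩ := htrans x0 y
    refine ⟨Quotient.out u, ?_⟩
    rw [show mkQ L (Quotient.out u) = u from Quotient.out_eq u]
    exact hu
  choose rep hrep using hsurj0
  -- the character attached to e
  let χ : dualLattice L → dualLattice L → ℂ := fun e a =>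
    Complex.exp (2 * Real.pi * Complex.I * dotR (e : Fin n → ℝ) (a : Fin n → ℝ))
  have hχne : ∀ e a, χ e a ≠ 0 := fun e a => Complex.exp_ne_zero _
  have hχadd : ∀ e a b, χ e (a + b) = χ e a * χ e b := by
    intro e a b
    show Complex.exp _ = Complex.exp _ * Complex.exp _
    rw [← Complex.exp_add]
    congr 1
    have hc : dotR (e : Fin n → ℝ) ((a + b : dualLattice L) : Fin n → ℝ)
        = dotR (e : Fin n → ℝ) (a : Fin n → ℝ) + dotR (e : Fin n → ℝ) (b : Fin n → ℝ) := by
      rw [AddSubgroup.coe_add, dotR_add_right]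
    rw [hc]
    push_cast
    ring
  have hχstab : ∀ (e : dualLattice L), (e : Fin n → ℝ) ∈ dualLattice Ktil →
      ∀ a b : dualLattice L, f (mkQ L a) x0 = f (mkQ L b) x0 → χ e a = χ e b := by
    intro e he a b hab
    have hK : mkQ L (-a + b) ∈ K := by
      show f (QuotientAddGroup.mk (-a + b)) x0 = x0
      have hmk : (QuotientAddGroup.mk (-a + b) : latQuot L) = -(mkQ L a) + mkQ L b := by
        simp [mkQ]
      rw [hmk, add_comm, hadd, show f (mkQ L b) x0 = f (mkQ L a) x0 from hab.symm, hinv]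
    have hmem : ((-a + b : dualLattice L) : Fin n → ℝ) ∈ Ktil := ⟨-a + b, hK, rfl⟩
    obtain ⟨z, hz⟩ := he _ hmem
    have h2 : dotR (e : Fin n → ℝ) ((-a + b : dualLattice L) : Fin n → ℝ)
        = -dotR (e : Fin n → ℝ) (a : Fin n → ℝ) + dotR (e : Fin n → ℝ) (b : Fin n → ℝ) := by
      rw [AddSubgroup.coe_add, AddSubgroup.coe_neg, dotR_add_right, dotR_neg_right]
    rw [h2] at hz
    have hdot : dotR (e : Fin n → ℝ) (b : Fin n → ℝ)
        = dotR (e : Fin n → ℝ) (a : Fin n → ℝ) + (z : ℝ) := by linarith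
    show Complex.exp _ = Complex.exp _
    rw [hdot]
    push_cast
    rw [mul_add, Complex.exp_add]
    have hz1 : Complex.exp (2 * (Real.pi : ℂ) * Complex.I * (z : ℂ)) = 1 := by
      have := Complex.exp_int_mul_two_pi_mul_I z
      rw [← this]
      congr 1
      ring
    rw [hz1, mul_one]
  -- row sums against a vector
  have hsumv : ∀ (g : latQuot L) (x : B) (v : B → ℂ),
      ∑ y, (N g x y : ℂ) * v y = v (f g x) := by
    intro g x v
    rw [Finset.sum_eq_single (f g x)]
    · rw [hf1]; simp
    · intro z _ hz; rw [hf2 g x z hz]; simp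
    · intro h; exact absurd (Finset.mem_univ _) h
  have hshift : ∀ (u : dualLattice L) (x : B),
      f (mkQ L u) x = f (mkQ L (rep x + u)) x0 := by
    intro u x
    have h1 : mkQ L (rep x + u) = mkQ L (rep x) + mkQ L u := by simp [mkQ]
    rw [h1, hadd, hrep]
  refine ⟨eB.symm, ?_, ?_, ?_⟩
  · -- translation structure
    intro u x y
    rw [hne0]
    have hiff : (QuotientAddGroup.mk' K u + eB.symm x = eB.symm y) ↔ eB (QuotientAddGroup.mk' K u + eB.symm x) = y := by
      constructor
      · intro h; rw [h, Equiv.apply_symm_apply]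
      · intro h; rw [← h, Equiv.symm_apply_apply]
    rw [hiff, heB, hact, show ψ (eB.symm x) = x from eB.apply_symm_apply x]
    exact eq_comm
  · -- every coset of E/L is an exponent
    intro e he
    refine ⟨fun y => χ e (rep y), ?_, ?_⟩
    · intro h0
      exact hχne e (rep x0) (congrFun h0 x0)
    · intro u x
      rw [hsumv]
      have h1 : χ e (rep (f (mkQ L u) x)) = χ e (rep x + u) := by
        apply hχstab e he
        rw [hrep, hshift]
      show χ e (rep (f (mkQ L u) x)) = _ * χ e (rep x)
      rw [h1, hχadd]
      ring
  · -- multiplicity one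
    intro e he v w hv hw
    have hv' : ∀ y, v y = χ e (rep y) * v x0 := by
      intro y
      have h := hv (rep y) x0
      rw [hsumv, hrep] at h
      exact h
    have hw' : ∀ y, w y = χ e (rep y) * w x0 := by
      intro y
      have h := hw (rep y) x0
      rw [hsumv, hrep] at h
      exact h
    by_cases h00 : v x0 = 0 ∧ w x0 = 0
    · refine ⟨1, 1, by simp, funext fun y => ?_⟩
      simp only [Pi.smul_apply, smul_eq_mul, one_mul]
      rw [hv' y, hw' y, h00.1, h00.2]
    · refine ⟨w x0, v x0, ?_, funext fun y => ?_⟩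
      · intro hc
        rw [Prod.mk.injEq] at hc
        exact h00 ⟨hc.2, hc.1⟩
      · simp only [Pi.smul_apply, smul_eq_mul]
        rw [hv' y, hw' y]
        ring


end
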